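/- Let D = (d₁, …, d_k) with d₁ ≥ … ≥ d_k ≥ 2 be a degree sequence realizable by a tree. Then there exists a tree T with degree sequence D such that SO(T) ≤ SO(T′) for every tree T′ with degree sequence D, and moreover T satisfies the path condition. -/

import Mathlib

open SimpleGraph

/-- Degree of a vertex. -/
noncomputable def deg {V : Type*} (G : SimpleGraph V) (v : V) : ℕ :=
  Nat.card (G.neighborSet v)

/-- Sombor index. -/
noncomputable def somborIndex {V : Type*} (G : SimpleGraph V) : ℝ :=
  ∑ᶠ e ∈ G.edgeSet,
    Sym2.lift ⟨fun u v => Real.sqrt ((deg G u : ℝ) ^ 2 + (deg G v : ℝ) ^ 2),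
      fun u v => by simp [add_comm]⟩ e

/-- Multiset of degrees of non-pendant vertices. -/
noncomputable def degSeq {V : Type*} [Fintype V] (G : SimpleGraph V) : Multiset ℕ :=
  ((Finset.univ : Finset V).filter (fun v => deg G v ≠ 1)).val.map (deg G)

def pathCondition {V : Type*} (G : SimpleGraph V) : Prop :=
  ∀ ⦃u v : V⦄ (p : G.Walk u v), p.IsPath → 3 ≤ p.length →
    deg G u < deg G v → deg G (p.getVert 1) ≤ deg G (p.getVert (p.length - 1))

def attachPendants {V : Type*} (G : SimpleGraph V) (v : V) (k : ℕ) :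
    SimpleGraph (V ⊕ Fin k) where
  Adj x y :=
    match x, y with
    | Sum.inl a, Sum.inl b => G.Adj a b
    | Sum.inl a, Sum.inr _ => a = v
    | Sum.inr _, Sum.inl b => b = v
    | Sum.inr _, Sum.inr _ => False
  symm := ⟨by
    rintro (a | i) (b | j) h
    · exact h.symm
    · exact h
    · exact h
    · exact h.elim⟩
  loopless := ⟨by
    rintro (a | i) h
    · exact G.loopless.irrefl a h
    · exact h⟩

set_option linter.unusedSectionVars false
section Aux
variable {V : Type*}

lemma deg_eq_degree [Fintype V] (G : SimpleGraph V) [DecidableRel G.Adj] (v : V) :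
    deg G v = G.degree v := by
  rw [deg, Nat.card_eq_fintype_card, G.card_neighborSet_eq_degree]

lemma somborIndex_eq_sum [Fintype V] (G : SimpleGraph V) [Fintype G.edgeSet] :
    somborIndex G = ∑ e ∈ G.edgeFinset,
      Sym2.lift ⟨fun u v => Real.sqrt ((deg G u : ℝ) ^ 2 + (deg G v : ℝ) ^ 2),
        fun u v => by simp [add_comm]⟩ e := by
  rw [somborIndex, ← G.coe_edgeFinset, finsum_mem_coe_finset]

lemma getVert_injOn' {G : SimpleGraph V} {u v : V} {p : G.Walk u v} (hp : p.IsPath) :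
    ∀ i, i ≤ p.length → ∀ j, j ≤ p.length → p.getVert i = p.getVert j → i = j := by
  induction p with
  | nil => intro i hi j hj _; simp only [Walk.length_nil, Nat.le_zero] at hi hj; omega
  | @cons u x v h q ih =>
    rw [SimpleGraph.Walk.cons_isPath_iff] at hp
    intro i hi j hj hij
    match i, j with
    | 0, 0 => rfl
    | 0, (j+1) =>
      exfalso
      apply hp.2
      rw [SimpleGraph.Walk.mem_support_iff_exists_getVert]
      refine ⟨j, ?_, ?_⟩
      · have : (Walk.cons h q).getVert (j+1) = q.getVert j := rfl
        rw [Walk.getVert_zero] at hij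
        rw [← this, ← hij]
      · simp [Walk.length_cons] at hj; omega
    | (i+1), 0 =>
      exfalso
      apply hp.2
      rw [SimpleGraph.Walk.mem_support_iff_exists_getVert]
      refine ⟨i, ?_, ?_⟩
      · have : (Walk.cons h q).getVert (i+1) = q.getVert i := rfl
        rw [Walk.getVert_zero] at hij
        rw [← this, hij]
      · simp [Walk.length_cons] at hi; omega
    | (i+1), (j+1) =>
      have : i = j := by
        apply ih hp.1 i (by simp [Walk.length_cons] at hi; omega) j
          (by simp [Walk.length_cons] at hj; omega)
        exact hij
      omega

lemma not_adj_of_isPath {G : SimpleGraph V} (hG : G.IsAcyclic) {x y : V} {q : G.Walk x y}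
    (hq : q.IsPath) (h2 : 2 ≤ q.length) : ¬ G.Adj x y := by
  intro hadj
  have huniq := hG.path_unique ⟨q, hq⟩ (SimpleGraph.Path.singleton hadj)
  have hlen : q.length = 1 := by
    have := congrArg (fun p : G.Path x y => (p : G.Walk x y).length) huniq
    simpa [SimpleGraph.Path.singleton] using this
  omega

lemma reachable_mono_adj {G H : SimpleGraph V} (hGH : ∀ ⦃x y⦄, G.Adj x y → H.Reachable x y)
    {u v : V} (h : G.Reachable u v) : H.Reachable u v := by
  obtain ⟨w⟩ := h
  induction w with
  | nil => exact Reachable.refl _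
  | cons h q ih => exact (hGH h).trans ih

lemma card_le_edgeFinset_card_add_one [Fintype V] (G : SimpleGraph V) [Fintype G.edgeSet]
    (hG : G.Connected) : Fintype.card V ≤ G.edgeFinset.card + 1 := by
  classical
  obtain ⟨r⟩ := hG.nonempty
  have hP : ∀ w : V, w ≠ r → ∃ nw, G.Adj w nw ∧ G.dist nw r < G.dist w r := by
    intro w hw
    obtain ⟨p, hp⟩ := (hG w r).exists_walk_length_eq_dist
    have hpos : 0 < G.dist w r := hG.pos_dist_of_ne hw
    have hnil : ¬ p.Nil := by rw [SimpleGraph.Walk.nil_iff_length_eq]; omega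
    refine ⟨p.getVert 1, p.adj_snd hnil, ?_⟩
    have h1 : p.tail.length + 1 = p.length := SimpleGraph.Walk.length_tail_add_one hnil
    have h2 : G.dist (p.getVert 1) r ≤ p.tail.length := G.dist_le p.tail
    omega
  set f : V → Sym2 V := fun w => if h : w = r then s(r, r) else s(w, (hP w h).choose) with hf
  have hmem : ∀ w ∈ Finset.univ.erase r, f w ∈ G.edgeFinset := by
    intro w hw
    rw [Finset.mem_erase] at hw
    rw [hf]
    simp only [dif_neg hw.1]
    rw [SimpleGraph.mem_edgeFinset, SimpleGraph.mem_edgeSet]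
    exact (hP w hw.1).choose_spec.1
  have hinj : Set.InjOn f (Finset.univ.erase r : Finset V) := by
    intro w1 h1 w2 h2 heq
    simp only [Finset.coe_erase, Set.mem_diff, Set.mem_singleton_iff] at h1 h2
    rw [hf] at heq
    simp only [dif_neg h1.2, dif_neg h2.2, Sym2.eq_iff] at heq
    rcases heq with ⟨h, -⟩ | ⟨ha, hb⟩
    · exact h
    · exfalso
      have c1 := (hP w1 h1.2).choose_spec.2
      have c2 := (hP w2 h2.2).choose_spec.2
      rw [hb] at c1
      rw [← ha] at c2
      omega
  have hle := Finset.card_le_card_of_injOn f hmem hinj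
  rw [Finset.card_erase_of_mem (Finset.mem_univ r), Finset.card_univ] at hle
  omega
end Aux

section B
variable {V : Type*}

lemma isTree_of_connected_of_card [Fintype V] (G : SimpleGraph V) [Fintype G.edgeSet]
    (hc : G.Connected) (hcard : G.edgeFinset.card + 1 = Fintype.card V) : G.IsTree := by
  classical
  refine ⟨hc, ?_⟩
  intro v c hcyc
  cases c with
  | nil => simp [Walk.isCycle_def] at hcyc
  | @cons _ w _ hadj q =>
    set e : Sym2 V := s(v, w) with he
    have hmem : e ∈ (Walk.cons hadj q).edges := by simp [he]
    have hnb : ¬ G.IsBridge e := by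
      rw [he, isBridge_iff_adj_and_forall_cycle_notMem]
      push_neg
      exact ⟨v, Walk.cons hadj q, hcyc, hmem⟩
      exact hadj
    have hreach : (G \ fromEdgeSet {e}).Reachable v w := by
      rw [he] at hnb ⊢
      rw [isBridge_iff] at hnb
      push_neg at hnb
      exact hnb
    set H := G \ fromEdgeSet {e} with hH
    have hHadj : ∀ x y, H.Adj x y ↔ G.Adj x y ∧ s(x, y) ≠ e := by
      intro x y
      rw [hH]
      simp only [sdiff_adj, fromEdgeSet_adj, Set.mem_singleton_iff, not_and, not_not]
      constructor
      · rintro ⟨h1, h2⟩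
        exact ⟨h1, fun hh => h1.ne (h2 hh)⟩
      · rintro ⟨h1, h2⟩
        exact ⟨h1, fun hh => absurd hh h2⟩
    have hHconn : H.Connected := by
      haveI : Nonempty V := hc.nonempty
      constructor
      intro x y
      refine reachable_mono_adj ?_ (hc x y)
      intro x y hxy
      by_cases hxye : s(x, y) = e
      · rw [he] at hxye
        rw [Sym2.eq_iff] at hxye
        rcases hxye with ⟨rfl, rfl⟩ | ⟨rfl, rfl⟩
        · exact hreach
        · exact hreach.symm
      · exact ((hHadj x y).2 ⟨hxy, hxye⟩).reachable
    haveI : Fintype H.edgeSet := (H.edgeSet.toFinite).fintype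
    have hHE : H.edgeFinset = G.edgeFinset.erase e := by
      ext f
      simp only [mem_edgeFinset, Finset.mem_erase]
      induction f using Sym2.ind with
      | _ x y =>
        rw [mem_edgeSet, mem_edgeSet, hHadj]
        tauto
    have hcardH : H.edgeFinset.card = G.edgeFinset.card - 1 := by
      rw [hHE, Finset.card_erase_of_mem (by rw [mem_edgeFinset, mem_edgeSet]; exact hadj)]
    have h1 : 1 ≤ G.edgeFinset.card :=
      Finset.card_pos.mpr ⟨e, by rw [mem_edgeFinset, mem_edgeSet]; exact hadj⟩
    have := card_le_edgeFinset_card_add_one H hHconn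
    omega

lemma sqrt_diff_eq {x b c : ℝ} (hb : 0 < b) :
    Real.sqrt (x^2 + b^2) - Real.sqrt (x^2 + c^2) =
      (b^2 - c^2) / (Real.sqrt (x^2 + b^2) + Real.sqrt (x^2 + c^2)) := by
  have hA : (0:ℝ) ≤ x^2 + b^2 := by positivity
  have hC : (0:ℝ) ≤ x^2 + c^2 := by positivity
  have hApos : (0:ℝ) < x^2 + b^2 := by positivity
  have hs : 0 < Real.sqrt (x^2 + b^2) + Real.sqrt (x^2 + c^2) := by
    have := Real.sqrt_pos.mpr hApos
    have := Real.sqrt_nonneg (x^2 + c^2)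
    linarith
  rw [eq_div_iff (ne_of_gt hs)]
  have e1 : Real.sqrt (x^2 + b^2) ^ 2 = x^2 + b^2 := Real.sq_sqrt hA
  have e2 : Real.sqrt (x^2 + c^2) ^ 2 = x^2 + c^2 := Real.sq_sqrt hC
  ring_nf
  nlinarith [e1, e2]

lemma key_ineq {a b c d : ℝ} (ha : 0 ≤ a) (hc : 0 ≤ c) (had : a < d) (hcb : c < b) :
    Real.sqrt (a^2 + c^2) + Real.sqrt (b^2 + d^2) <
      Real.sqrt (a^2 + b^2) + Real.sqrt (c^2 + d^2) := by
  have hb : 0 < b := lt_of_le_of_lt hc hcb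
  have hd : 0 < d := lt_of_le_of_lt ha had
  have hbd : Real.sqrt (b^2 + d^2) = Real.sqrt (d^2 + b^2) := by rw [add_comm]
  have hcd : Real.sqrt (c^2 + d^2) = Real.sqrt (d^2 + c^2) := by rw [add_comm]
  rw [hbd, hcd]
  have h1 := sqrt_diff_eq (x := a) (c := c) hb
  have h2 := sqrt_diff_eq (x := d) (c := c) hb
  have hbc2 : 0 < b^2 - c^2 := by nlinarith
  have hSa : 0 < Real.sqrt (a^2 + b^2) + Real.sqrt (a^2 + c^2) := by
    have : (0:ℝ) < a^2 + b^2 := by positivity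
    have := Real.sqrt_pos.mpr this
    have := Real.sqrt_nonneg (a^2 + c^2)
    linarith
  have hSlt : Real.sqrt (a^2 + b^2) + Real.sqrt (a^2 + c^2) <
      Real.sqrt (d^2 + b^2) + Real.sqrt (d^2 + c^2) := by
    have ha2 : a^2 < d^2 := by nlinarith
    have l1 : Real.sqrt (a^2 + b^2) < Real.sqrt (d^2 + b^2) :=
      Real.sqrt_lt_sqrt (by positivity) (by linarith)
    have l2 : Real.sqrt (a^2 + c^2) ≤ Real.sqrt (d^2 + c^2) :=
      Real.sqrt_le_sqrt (by linarith)
    linarith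
  have hdiv : (b^2 - c^2) / (Real.sqrt (d^2 + b^2) + Real.sqrt (d^2 + c^2)) <
      (b^2 - c^2) / (Real.sqrt (a^2 + b^2) + Real.sqrt (a^2 + c^2)) :=
    div_lt_div_of_pos_left hbc2 hSa hSlt
  linarith
end B

section Swap
variable {V : Type*} [Fintype V] [DecidableEq V]

def swapG (T : SimpleGraph V) (a b c d : V) : SimpleGraph V where
  Adj x y := (T.Adj x y ∧ s(x, y) ≠ s(a, b) ∧ s(x, y) ≠ s(c, d)) ∨
    (x ≠ y ∧ (s(x, y) = s(a, c) ∨ s(x, y) = s(b, d)))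
  symm := ⟨by
    intro x y h
    have hs : s(y, x) = s(x, y) := Sym2.eq_swap
    rcases h with ⟨h1, h2, h3⟩ | ⟨h1, h2⟩
    · exact Or.inl ⟨h1.symm, by rwa [hs], by rwa [hs]⟩
    · exact Or.inr ⟨h1.symm, by rwa [hs]⟩⟩
  loopless := ⟨by
    intro x h
    rcases h with ⟨h1, -⟩ | ⟨h1, -⟩
    · exact T.loopless.irrefl x h1
    · exact h1 rfl⟩

lemma swapG_adj {T : SimpleGraph V} {a b c d x y : V} :
    (swapG T a b c d).Adj x y ↔ (T.Adj x y ∧ s(x, y) ≠ s(a, b) ∧ s(x, y) ≠ s(c, d)) ∨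
      (x ≠ y ∧ (s(x, y) = s(a, c) ∨ s(x, y) = s(b, d))) := Iff.rfl

lemma swapG_comm₁ (T : SimpleGraph V) (a b c d : V) :
    swapG T c d a b = swapG T a b c d := by
  ext x y
  rw [swapG_adj, swapG_adj]
  constructor
  · rintro (⟨h1, h2, h3⟩ | ⟨h1, h2 | h2⟩)
    · exact Or.inl ⟨h1, h3, h2⟩
    · exact Or.inr ⟨h1, Or.inl (h2.trans Sym2.eq_swap)⟩
    · exact Or.inr ⟨h1, Or.inr (h2.trans Sym2.eq_swap)⟩
  · rintro (⟨h1, h2, h3⟩ | ⟨h1, h2 | h2⟩)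
    · exact Or.inl ⟨h1, h3, h2⟩
    · exact Or.inr ⟨h1, Or.inl (h2.trans Sym2.eq_swap)⟩
    · exact Or.inr ⟨h1, Or.inr (h2.trans Sym2.eq_swap)⟩

lemma swapG_comm₂ (T : SimpleGraph V) (a b c d : V) :
    swapG T b a d c = swapG T a b c d := by
  ext x y
  rw [swapG_adj, swapG_adj]
  have e1 : s(b, a) = s(a, b) := Sym2.eq_swap
  have e2 : s(d, c) = s(c, d) := Sym2.eq_swap
  rw [e1, e2]
  constructor
  · rintro (⟨h1, h2, h3⟩ | ⟨h1, h2 | h2⟩)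
    · exact Or.inl ⟨h1, h2, h3⟩
    · exact Or.inr ⟨h1, Or.inr h2⟩
    · exact Or.inr ⟨h1, Or.inl h2⟩
  · rintro (⟨h1, h2, h3⟩ | ⟨h1, h2 | h2⟩)
    · exact Or.inl ⟨h1, h2, h3⟩
    · exact Or.inr ⟨h1, Or.inr h2⟩
    · exact Or.inr ⟨h1, Or.inl h2⟩

lemma swapG_neighborSet_left {T : SimpleGraph V} {a b c d : V}
    (hab : T.Adj a b) (hac' : a ≠ c) (had' : a ≠ d) :
    (swapG T a b c d).neighborSet a = insert c (T.neighborSet a \ {b}) := by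
  have hab' : a ≠ b := hab.ne
  ext y
  simp only [mem_neighborSet, swapG_adj, ne_eq, Sym2.eq_iff, Set.mem_insert_iff, Set.mem_diff,
    Set.mem_singleton_iff]
  constructor
  · rintro (⟨h1, h2, h3⟩ | ⟨h1, h2 | h2⟩) <;> aesop
  · rintro (rfl | ⟨h1, h2⟩)
    · refine Or.inr ⟨hac', Or.inl ?_⟩
      simp
    · refine Or.inl ⟨h1, ?_, ?_⟩ <;> aesop

lemma swapG_neighborSet_other {T : SimpleGraph V} {a b c d x : V}
    (hxa : x ≠ a) (hxb : x ≠ b) (hxc : x ≠ c) (hxd : x ≠ d) :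
    (swapG T a b c d).neighborSet x = T.neighborSet x := by
  ext y
  simp only [mem_neighborSet, swapG_adj, ne_eq, Sym2.eq_iff]
  constructor
  · rintro (⟨h1, -⟩ | ⟨h1, h2 | h2⟩) <;> aesop
  · intro h1
    refine Or.inl ⟨h1, ?_, ?_⟩ <;> aesop

lemma deg_swapG_left {T : SimpleGraph V} {a b c d : V}
    (hab : T.Adj a b) (hac : ¬ T.Adj a c) (hac' : a ≠ c) (had' : a ≠ d) :
    deg (swapG T a b c d) a = deg T a := by
  rw [deg, deg, Nat.card_coe_set_eq, Nat.card_coe_set_eq,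
    swapG_neighborSet_left hab hac' had']
  have hcm : c ∉ T.neighborSet a \ {b} := fun h => hac h.1
  have hbm : b ∈ T.neighborSet a := hab
  rw [Set.ncard_insert_of_notMem hcm (Set.toFinite _),
    Set.ncard_diff_singleton_of_mem hbm]
  have hpos : 0 < (T.neighborSet a).ncard :=
    (Set.ncard_pos (Set.toFinite _)).mpr ⟨b, hbm⟩
  omega

lemma deg_swapG {T : SimpleGraph V} {a b c d : V}
    (hab : T.Adj a b) (hcd : T.Adj c d) (hac : ¬ T.Adj a c) (hbd : ¬ T.Adj b d)
    (hac' : a ≠ c) (had' : a ≠ d) (hbc' : b ≠ c) (hbd' : b ≠ d) (x : V) :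
    deg (swapG T a b c d) x = deg T x := by
  have hab' : a ≠ b := hab.ne
  have hcd' : c ≠ d := hcd.ne
  by_cases hxa : x = a
  · subst hxa; exact deg_swapG_left hab hac hac' had'
  by_cases hxb : x = b
  · subst hxb
    rw [← swapG_comm₂]
    exact deg_swapG_left hab.symm (fun h => hbd h) hbd' hbc'
  by_cases hxc : x = c
  · subst hxc
    rw [← swapG_comm₁]
    exact deg_swapG_left hcd (fun h => hac h.symm) hac'.symm hbc'.symm
  by_cases hxd : x = d
  · subst hxd
    rw [← swapG_comm₁, ← swapG_comm₂]
    exact deg_swapG_left hcd.symm (fun h => hbd h.symm) hbd'.symm had'.symm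
  · rw [deg, deg, swapG_neighborSet_other hxa hxb hxc hxd]

lemma swapG_edgeFinset {T : SimpleGraph V} {a b c d : V}
    [Fintype (swapG T a b c d).edgeSet] [Fintype T.edgeSet]
    (hab : T.Adj a b) (hcd : T.Adj c d)
    (hac' : a ≠ c) (had' : a ≠ d) (hbc' : b ≠ c) (hbd' : b ≠ d) :
    (swapG T a b c d).edgeFinset =
      insert s(a, c) (insert s(b, d) ((T.edgeFinset.erase s(a, b)).erase s(c, d))) := by
  have hab' : a ≠ b := hab.ne
  have hcd' : c ≠ d := hcd.ne
  ext e
  induction e using Sym2.ind with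
  | _ x y =>
    simp only [mem_edgeFinset, Finset.mem_insert, Finset.mem_erase, mem_edgeSet, swapG_adj, ne_eq]
    constructor
    · rintro (⟨h1, h2, h3⟩ | ⟨h1, h2 | h2⟩)
      · exact Or.inr (Or.inr ⟨h3, h2, h1⟩)
      · exact Or.inl h2
      · exact Or.inr (Or.inl h2)
    · rintro (h | h | ⟨h3, h2, h1⟩)
      · refine Or.inr ⟨?_, Or.inl h⟩
        rw [Sym2.eq_iff] at h
        rcases h with ⟨rfl, rfl⟩ | ⟨rfl, rfl⟩
        · exact hac'
        · exact hac'.symm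
      · refine Or.inr ⟨?_, Or.inr h⟩
        rw [Sym2.eq_iff] at h
        rcases h with ⟨rfl, rfl⟩ | ⟨rfl, rfl⟩
        · exact hbd'
        · exact hbd'.symm
      · exact Or.inl ⟨h1, h2, h3⟩

end Swap

section Count
variable {V : Type*}

lemma degSeq_eq_of_deg_eq [Fintype V] {G H : SimpleGraph V}
    (h : ∀ v, deg G v = deg H v) : degSeq G = degSeq H := by
  have hfun : deg G = deg H := funext h
  rw [degSeq, degSeq, hfun]

lemma degSeq_card_rel [Fintype V] (T : SimpleGraph V) (hT : T.IsTree) (D : List ℕ)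
    (hD : degSeq T = ↑D) :
    D.length ≤ Fintype.card V ∧
      D.sum + (Fintype.card V - D.length) = 2 * (Fintype.card V - 1) ∧
      1 ≤ Fintype.card V := by
  classical
  letI : DecidableRel T.Adj := Classical.decRel _
  set s : Finset V := Finset.univ.filter (fun v => deg T v ≠ 1) with hs
  have hk : s.card = D.length := by
    have := congrArg Multiset.card hD
    rw [degSeq, Multiset.card_map, Multiset.coe_card] at this
    exact this
  have hsum : ∑ v ∈ s, deg T v = D.sum := by
    have := congrArg Multiset.sum hD
    rwa [degSeq, Multiset.sum_coe] at this
  have hsplit : ∑ v ∈ s, deg T v + ∑ v ∈ Finset.univ.filter (fun v => ¬ deg T v ≠ 1), deg T v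
      = ∑ v : V, deg T v := Finset.sum_filter_add_sum_filter_not _ _ _
  have hone : ∑ v ∈ Finset.univ.filter (fun v => ¬ deg T v ≠ 1), deg T v
      = (Finset.univ.filter (fun v => ¬ deg T v ≠ 1)).card := by
    rw [Finset.card_eq_sum_ones]
    refine Finset.sum_congr rfl ?_
    intro v hv
    rw [Finset.mem_filter] at hv
    simpa using hv.2
  have hcards : s.card + (Finset.univ.filter (fun v => ¬ deg T v ≠ 1)).card = Fintype.card V := by
    rw [hs, Finset.card_filter_add_card_filter_not, Finset.card_univ]
  have htot : ∑ v : V, deg T v = 2 * T.edgeFinset.card := by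
    rw [Finset.sum_congr rfl (fun v _ => deg_eq_degree T v)]
    exact T.sum_degrees_eq_twice_card_edges
  have hedge : T.edgeFinset.card + 1 = Fintype.card V := hT.card_edgeFinset
  omega
end Count

section Main
variable {V : Type*}

lemma minimizer_pathCondition [Fintype V] [DecidableEq V] (T : SimpleGraph V) (hT : T.IsTree)
    (hmin : ∀ T' : SimpleGraph V, T'.IsTree → degSeq T' = degSeq T →
      somborIndex T ≤ somborIndex T') : pathCondition T := by
  classical
  intro u v p hp hlen hdeg
  by_contra hcon
  push_neg at hcon
  set t := p.length with ht
  have h3 : 3 ≤ t := hlen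
  have hgv0 : p.getVert 0 = u := p.getVert_zero
  have hgvt : p.getVert t = v := p.getVert_length
  set b := p.getVert 1 with hb
  set c := p.getVert (t - 1) with hc
  have hinj := getVert_injOn' hp
  have hne : ∀ i j, i ≤ t → j ≤ t → i ≠ j → p.getVert i ≠ p.getVert j := by
    intro i j hi hj hij heq
    exact hij (hinj i hi j hj heq)
  have hab' : u ≠ b := by
    rw [← hgv0, hb]; exact hne 0 1 (by omega) (by omega) (by omega)
  have hac' : u ≠ c := by
    rw [← hgv0, hc]; exact hne 0 (t - 1) (by omega) (by omega) (by omega)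
  have had' : u ≠ v := by
    intro h
    exact hne 0 t (by omega) (by omega) (by omega) (by rw [hgv0, hgvt]; exact h)
  have hbc' : b ≠ c := by
    rw [hb, hc]; exact hne 1 (t - 1) (by omega) (by omega) (by omega)
  have hbd' : b ≠ v := by
    intro h
    exact hne 1 t (by omega) (by omega) (by omega) (by rw [hgvt]; exact h)
  have hcd' : c ≠ v := by
    intro h
    exact hne (t - 1) t (by omega) (by omega) (by omega) (by rw [hgvt]; exact h)
  have hab : T.Adj u b := by
    have := p.adj_getVert_succ (i := 0) (by omega)
    rwa [hgv0] at this
  have hcd : T.Adj c v := by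
    have := p.adj_getVert_succ (i := t - 1) (by omega)
    have he : t - 1 + 1 = t := by omega
    rw [he, hgvt] at this
    exact this
  have hpnil : ¬ p.Nil := by rw [Walk.nil_iff_length_eq]; omega
  have hbd : ¬ T.Adj b v := by
    have htail : p.tail.IsPath := hp.tail
    have hl := Walk.length_tail_add_one hpnil
    exact not_adj_of_isPath hT.IsAcyclic htail (by omega)
  have hac : ¬ T.Adj u c := by
    have hrnil : ¬ p.reverse.Nil := by
      rw [Walk.nil_iff_length_eq, Walk.length_reverse]; omega
    have hrp : p.reverse.IsPath := hp.reverse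
    have htail : p.reverse.tail.IsPath := hrp.tail
    have hl1 := Walk.length_tail_add_one hrnil
    have hl2 : p.reverse.length = p.length := Walk.length_reverse p
    have hnadj : ¬ T.Adj (p.reverse.getVert 1) u :=
      not_adj_of_isPath hT.IsAcyclic htail (by omega)
    have hrv : p.reverse.getVert 1 = c := by
      rw [Walk.getVert_reverse, ← ht, ← hc]
    rw [hrv] at hnadj
    exact fun h => hnadj h.symm
  -- the swapped graph
  have hmid : ∀ i, 1 ≤ i → i ≤ t - 1 → (swapG T u b c v).Reachable b (p.getVert i) := by
    intro i
    induction i with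
    | zero => omega
    | succ n ih =>
      intro h1 h2
      rcases Nat.lt_or_ge 1 (n + 1) with hgt | hle
      · have hn1 : 1 ≤ n := by omega
        have hreach := ih hn1 (by omega)
        have hadj : T.Adj (p.getVert n) (p.getVert (n + 1)) := p.adj_getVert_succ (by omega)
        have hkeep : (swapG T u b c v).Adj (p.getVert n) (p.getVert (n + 1)) := by
          rw [swapG_adj]
          refine Or.inl ⟨hadj, ?_, ?_⟩
          · intro h; rw [Sym2.eq_iff] at h
            rcases h with ⟨h, -⟩ | ⟨-, h⟩
            · exact hne n 0 (by omega) (by omega) (by omega) (by rw [hgv0]; exact h)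
            · exact hne (n + 1) 0 (by omega) (by omega) (by omega) (by rw [hgv0]; exact h)
          · intro h; rw [Sym2.eq_iff] at h
            rcases h with ⟨-, h⟩ | ⟨h, -⟩
            · exact hne (n + 1) t (by omega) (by omega) (by omega) (by rw [hgvt]; exact h)
            · exact hne n t (by omega) (by omega) (by omega) (by rw [hgvt]; exact h)
        exact hreach.trans hkeep.reachable
      · have hone : n + 1 = 1 := by omega
        rw [hone, ← hb]
  have hreach_bc : (swapG T u b c v).Reachable b c := by
    have := hmid (t - 1) (by omega) le_rfl
    rwa [← hc] at this
  have hedge_ac : (swapG T u b c v).Adj u c := by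
    rw [swapG_adj]; exact Or.inr ⟨hac', Or.inl rfl⟩
  have hedge_bd : (swapG T u b c v).Adj b v := by
    rw [swapG_adj]; exact Or.inr ⟨hbd', Or.inr rfl⟩
  have hlift : ∀ ⦃x y⦄, T.Adj x y → (swapG T u b c v).Reachable x y := by
    intro x y hxy
    by_cases h1 : s(x, y) = s(u, b)
    · rw [Sym2.eq_iff] at h1
      rcases h1 with ⟨rfl, rfl⟩ | ⟨rfl, rfl⟩
      · exact hedge_ac.reachable.trans hreach_bc.symm
      · exact (hedge_ac.reachable.trans hreach_bc.symm).symm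
    · by_cases h2 : s(x, y) = s(c, v)
      · rw [Sym2.eq_iff] at h2
        rcases h2 with ⟨rfl, rfl⟩ | ⟨rfl, rfl⟩
        · exact hreach_bc.symm.trans hedge_bd.reachable
        · exact (hreach_bc.symm.trans hedge_bd.reachable).symm
      · refine Adj.reachable ?_
        rw [swapG_adj]
        exact Or.inl ⟨hxy, h1, h2⟩
  haveI : Nonempty V := hT.isConnected.nonempty
  have hconn' : (swapG T u b c v).Connected := by
    constructor
    intro x y
    exact reachable_mono_adj hlift (hT.isConnected x y)
  letI iT : Fintype T.edgeSet := (T.edgeSet.toFinite).fintype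
  letI iG : Fintype (swapG T u b c v).edgeSet := ((swapG T u b c v).edgeSet.toFinite).fintype
  have hEF : (swapG T u b c v).edgeFinset =
      insert s(u, c) (insert s(b, v) ((T.edgeFinset.erase s(u, b)).erase s(c, v))) :=
    swapG_edgeFinset hab hcd hac' had' hbc' hbd'
  have hmab : s(u, b) ∈ T.edgeFinset := by rw [mem_edgeFinset, mem_edgeSet]; exact hab
  have hmcd : s(c, v) ∈ T.edgeFinset := by rw [mem_edgeFinset, mem_edgeSet]; exact hcd
  have hnac : s(u, c) ∉ T.edgeFinset := by rw [mem_edgeFinset, mem_edgeSet]; exact hac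
  have hnbd : s(b, v) ∉ T.edgeFinset := by rw [mem_edgeFinset, mem_edgeSet]; exact hbd
  have hne_abcd : s(u, b) ≠ s(c, v) := by
    intro h; rw [Sym2.eq_iff] at h
    rcases h with ⟨h, -⟩ | ⟨h, -⟩
    · exact hac' h
    · exact had' h
  have hne_acbd : s(u, c) ≠ s(b, v) := by
    intro h; rw [Sym2.eq_iff] at h
    rcases h with ⟨h, -⟩ | ⟨h, -⟩
    · exact hab' h
    · exact had' h
  have mcv : s(c, v) ∈ T.edgeFinset.erase s(u, b) :=
    Finset.mem_erase.mpr ⟨fun h => hne_abcd h.symm, hmcd⟩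
  have notin1 : s(b, v) ∉ (T.edgeFinset.erase s(u, b)).erase s(c, v) := fun h =>
    hnbd (Finset.mem_of_mem_erase (Finset.mem_of_mem_erase h))
  have notin2 : s(u, c) ∉ insert s(b, v) ((T.edgeFinset.erase s(u, b)).erase s(c, v)) := by
    intro h
    rcases Finset.mem_insert.mp h with h | h
    · exact hne_acbd h
    · exact hnac (Finset.mem_of_mem_erase (Finset.mem_of_mem_erase h))
  have hcardE : (swapG T u b c v).edgeFinset.card = T.edgeFinset.card := by
    have h1 : 0 < (T.edgeFinset.erase s(u, b)).card := Finset.card_pos.mpr ⟨_, mcv⟩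
    have h2 : 0 < T.edgeFinset.card := Finset.card_pos.mpr ⟨_, hmab⟩
    rw [hEF, Finset.card_insert_of_notMem notin2, Finset.card_insert_of_notMem notin1,
      Finset.card_erase_of_mem mcv, Finset.card_erase_of_mem hmab]
    rw [Finset.card_erase_of_mem hmab] at h1
    omega
  have htree' : (swapG T u b c v).IsTree :=
    isTree_of_connected_of_card _ hconn' (by rw [hcardE]; exact hT.card_edgeFinset)
  have hdegeq : ∀ x, deg (swapG T u b c v) x = deg T x :=
    deg_swapG hab hcd hac hbd hac' had' hbc' hbd'
  have hdegseq : degSeq (swapG T u b c v) = degSeq T := degSeq_eq_of_deg_eq hdegeq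
  have hminle := hmin (swapG T u b c v) htree' hdegseq
  have hfun : deg (swapG T u b c v) = deg T := funext hdegeq
  have hstrict : somborIndex (swapG T u b c v) < somborIndex T := by
    rw [somborIndex_eq_sum (swapG T u b c v), somborIndex_eq_sum T]
    simp only [hfun]
    rw [hEF, Finset.sum_insert notin2, Finset.sum_insert notin1,
      Finset.sum_erase_eq_sub mcv, Finset.sum_erase_eq_sub hmab]
    simp only [Sym2.lift_mk]
    have hkey := key_ineq (a := (deg T u : ℝ)) (b := (deg T b : ℝ)) (c := (deg T c : ℝ))
      (d := (deg T v : ℝ)) (Nat.cast_nonneg _) (Nat.cast_nonneg _)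
      (by exact_mod_cast hdeg) (by exact_mod_cast hcon)
    linarith
  linarith
end Main

/-- For any tree-realizable degree sequence `D = (d₁ ≥ … ≥ d_k ≥ 2)`, there exists a tree
with degree sequence `D` minimizing the Sombor index among all trees with degree sequence `D`
which moreover satisfies the path condition. -/
theorem exists_minimizer_pathCondition (D : List ℕ) (hne : D ≠ [])
    (hsort : D.Pairwise (· ≥ ·)) (hD : ∀ d ∈ D, 2 ≤ d)
    (hreal : ∃ (n : ℕ) (T : SimpleGraph (Fin n)), T.IsTree ∧ degSeq T = ↑D) :
    ∃ (n : ℕ) (T : SimpleGraph (Fin n)), T.IsTree ∧ degSeq T = ↑D ∧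
      (∀ (m : ℕ) (T' : SimpleGraph (Fin m)), T'.IsTree → degSeq T' = ↑D →
        somborIndex T ≤ somborIndex T') ∧
      pathCondition T := by
  classical
  obtain ⟨n₀, T₀, hT₀, hD₀⟩ := hreal
  have hcard : ∀ (m : ℕ) (T' : SimpleGraph (Fin m)), T'.IsTree → degSeq T' = ↑D → m = n₀ := by
    intro m T' h1 h2
    have r1 := degSeq_card_rel T' h1 D h2
    have r2 := degSeq_card_rel T₀ hT₀ D hD₀
    simp only [Fintype.card_fin] at r1 r2
    omega
  set P : SimpleGraph (Fin n₀) → Prop := fun T => T.IsTree ∧ degSeq T = ↑D with hP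
  set s : Finset (SimpleGraph (Fin n₀)) := Finset.univ.filter P with hs
  have hsne : s.Nonempty :=
    ⟨T₀, by rw [hs]; exact Finset.mem_filter.mpr ⟨Finset.mem_univ _, hT₀, hD₀⟩⟩
  obtain ⟨T, hTs, hTmin⟩ := Finset.exists_min_image s somborIndex hsne
  rw [hs, Finset.mem_filter] at hTs
  refine ⟨n₀, T, hTs.2.1, hTs.2.2, ?_, ?_⟩
  · intro m T' h1 h2
    have hm := hcard m T' h1 h2
    subst hm
    exact hTmin T' (by rw [hs]; exact Finset.mem_filter.mpr ⟨Finset.mem_univ _, h1, h2⟩)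
  · apply minimizer_pathCondition T hTs.2.1
    intro T' h1 h2
    refine hTmin T' ?_
    rw [hs]
    exact Finset.mem_filter.mpr ⟨Finset.mem_univ _, h1, by rw [h2, hTs.2.2]⟩
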